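/- Let L ⊆ Σ^ω and let (x, x₁, x₂) be a certificate for non-DBW-recognizability of L. Then there exists a DBW-refuter R for L such that for every y ∈ {acc, rej}^ω: if y(j) = acc for infinitely many j then R(y) ∈ x·(x₁*·x₂)^ω, and if y(j) = acc for only finitely many j then R(y) ∈ x·(x₁+x₂)*·x₁^ω. -/
import Mathlib


/-- An (A/α)-transducer: reads letters of `A`, outputs letters of `α`. -/
structure Transducer (A α : Type) where
  S : Type
  [fin : Fintype S]
  init : S
  ρ : S → A → S
  τ : S → α

attribute [instance] Transducer.fin

def Transducer.run {A α : Type} (T : Transducer A α) (y : ℕ → A) : ℕ → T.S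
  | 0 => T.init
  | n + 1 => T.ρ (T.run y n) (y n)

/-- Output with environment initiation: output letter `j` is emitted at state `s_{j+1}`. -/
def Transducer.out {A α : Type} (T : Transducer A α) (y : ℕ → A) : ℕ → α :=
  fun j => T.τ (T.run y (j + 1))

/-- A DBW-refuter for `L`: a ({acc,rej}/Σ)-transducer (with `true` = acc, `false` = rej)
such that for every input `y`, the output is in `L` iff `y` has only finitely many acc's. -/
def DBWRefuter {α : Type} (L : Set (ℕ → α)) (R : Transducer Bool α) : Prop :=
  ∀ y : ℕ → Bool, R.out y ∈ L ↔ {j | y j = true}.Finite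

/-- `u` is a prefix of the infinite word `w`. -/
def HasPrefixWord {α : Type} (w : ℕ → α) (u : List α) : Prop :=
  ∀ i : Fin u.length, w i.1 = u.get i

/-- The ω-language `x·(x₁+x₂)*·x₁^ω`. -/
def LangA {α : Type} (x x₁ x₂ : List α) : Set (ℕ → α) :=
  { w | ∃ ws : List (List α), (∀ u ∈ ws, u = x₁ ∨ u = x₂) ∧
        ∀ n, HasPrefixWord w (x ++ ws.flatten ++ (List.replicate n x₁).flatten) }

/-- The ω-language `x·(x₁*·x₂)^ω`. -/
def LangB {α : Type} (x x₁ x₂ : List α) : Set (ℕ → α) :=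
  { w | ∃ j : ℕ → ℕ, ∀ n, HasPrefixWord w
        (x ++ ((List.range n).map (fun i => (List.replicate (j i) x₁).flatten ++ x₂)).flatten) }

namespace Stmt6Aux

variable {Sig : Type}

/-- phase: `none` = emitting `x`, `some false` = emitting `x₁`, `some true` = emitting `x₂`. -/
def lst (x x₁ x₂ : List Sig) : Option Bool → List Sig
  | none => x
  | some false => x₁
  | some true => x₂

/-- simulation state: (phase, index in current list, pending-acc flag) -/
abbrev St (Sig : Type) := Option Bool × ℕ × Bool

def g (x x₁ x₂ : List Sig) (s : St Sig) (b : Bool) : St Sig :=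
  if s.2.1 + 1 < (lst x x₁ x₂ s.1).length then (s.1, s.2.1 + 1, s.2.2 || b)
  else (some (s.2.2 || b), 0, false)

def gInit (x : List Sig) (b : Bool) : St Sig :=
  if x.length = 0 then (some b, 0, false) else (none, 0, b)

def st (x x₁ x₂ : List Sig) (y : ℕ → Bool) : ℕ → St Sig
  | 0 => gInit x (y 0)
  | j + 1 => g x x₁ x₂ (st x x₁ x₂ y j) (y (j + 1))

variable {x x₁ x₂ : List Sig} (h₁ : x₁ ≠ []) (h₂ : x₂ ≠ []) (y : ℕ → Bool)

include h₁ h₂ in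
lemma lst_ne_none_nonempty (c : Bool) : lst x x₁ x₂ (some c) ≠ [] := by
  cases c <;> simpa [lst]

include h₁ h₂ in
lemma inv (j : ℕ) : (st x x₁ x₂ y j).2.1 < (lst x x₁ x₂ (st x x₁ x₂ y j).1).length := by
  induction j with
  | zero =>
    simp only [st, gInit]
    split <;> rename_i h
    · rcases (y 0) <;> simp [lst] <;> [exact List.length_pos_iff.2 h₁; exact List.length_pos_iff.2 h₂]
    · simpa [lst] using Nat.pos_of_ne_zero h
  | succ n ih =>
    simp only [st, g]
    split <;> rename_i h
    · simpa using h
    · rcases ((st x x₁ x₂ y n).2.2 || y (n+1)) <;>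
        simp [lst] <;> [exact List.length_pos_iff.2 h₁; exact List.length_pos_iff.2 h₂]

/-- progression through a block -/
lemma prog {p : Option Bool} {f : Bool} {j : ℕ} (hs : st x x₁ x₂ y j = (p, 0, f)) :
    ∀ i, i < (lst x x₁ x₂ p).length →
      ∃ f' : Bool, st x x₁ x₂ y (j + i) = (p, i, f') ∧
        (f' = true ↔ (f = true ∨ ∃ m, j < m ∧ m ≤ j + i ∧ y m = true)) := by
  intro i
  induction i with
  | zero => intro _; exact ⟨f, by simpa using hs, by simp; intro m h1 h2; omega⟩
  | succ i ih =>
    intro hlt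
    obtain ⟨f', hst, hf'⟩ := ih (by omega)
    refine ⟨f' || y (j + i + 1), ?_, ?_⟩
    · have : j + (i + 1) = (j + i) + 1 := by omega
      rw [this]
      simp only [st]
      rw [hst]
      simp only [g]
      rw [if_pos (by simpa using hlt)]
    · simp only [Bool.or_eq_true, hf']
      constructor
      · rintro (⟨h | ⟨m, hm1, hm2, hm3⟩⟩ | h)
        · exact Or.inl h
        · exact Or.inr ⟨m, hm1, by omega, hm3⟩
        · exact Or.inr ⟨j + i + 1, by omega, by omega, h⟩
      · rintro (h | ⟨m, hm1, hm2, hm3⟩)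
        · exact Or.inl (Or.inl h)
        · rcases Nat.lt_or_ge m (j + i + 1) with h' | h'
          · exact Or.inl (Or.inr ⟨m, hm1, by omega, hm3⟩)
          · have : m = j + i + 1 := by omega
            exact Or.inr (this ▸ hm3)

/-- exiting a block -/
lemma blockExit {p : Option Bool} {f : Bool} {j : ℕ} (hne : lst x x₁ x₂ p ≠ [])
    (hs : st x x₁ x₂ y j = (p, 0, f)) :
    ∃ c : Bool, st x x₁ x₂ y (j + (lst x x₁ x₂ p).length) = (some c, 0, false) ∧
      (c = true ↔ (f = true ∨ ∃ m, j < m ∧ m ≤ j + (lst x x₁ x₂ p).length ∧ y m = true)) := by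
  set n := (lst x x₁ x₂ p).length with hn
  have hnpos : 0 < n := List.length_pos_iff.2 hne
  obtain ⟨f', hst, hf'⟩ := prog y hs (n - 1) (by omega)
  have hstep : j + n = (j + (n - 1)) + 1 := by omega
  refine ⟨f' || y (j + n), ?_, ?_⟩
  · rw [hstep]
    simp only [st]
    rw [hst]
    simp only [g]
    rw [if_neg (by simp; omega)]
  · simp only [Bool.or_eq_true, hf']
    constructor
    · rintro (⟨h | ⟨m, hm1, hm2, hm3⟩⟩ | h)
      · exact Or.inl h
      · exact Or.inr ⟨m, hm1, by omega, hm3⟩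
      · exact Or.inr ⟨j + n, by omega, le_refl _, h⟩
    · rintro (h | ⟨m, hm1, hm2, hm3⟩)
      · exact Or.inl (Or.inl h)
      · rcases Nat.lt_or_ge m (j + n) with h' | h'
        · exact Or.inl (Or.inr ⟨m, hm1, by omega, hm3⟩)
        · have : m = j + n := by omega
          exact Or.inr (this ▸ hm3)

/-- block start positions -/
def t (x x₁ x₂ : List Sig) (y : ℕ → Bool) : ℕ → ℕ
  | 0 => x.length
  | k + 1 => t x x₁ x₂ y k + (lst x x₁ x₂ (st x x₁ x₂ y (t x x₁ x₂ y k)).1).length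

/-- the k-th block -/
def blk (x x₁ x₂ : List Sig) (y : ℕ → Bool) (k : ℕ) : List Sig :=
  lst x x₁ x₂ (st x x₁ x₂ y (t x x₁ x₂ y k)).1

/-- window lower bound for block k (window is [lo k, t k]) -/
def lo (x x₁ x₂ : List Sig) (y : ℕ → Bool) : ℕ → ℕ
  | 0 => 0
  | k + 1 => t x x₁ x₂ y k + 1

include h₁ h₂ in
lemma blockStart (k : ℕ) :
    ∃ c : Bool, st x x₁ x₂ y (t x x₁ x₂ y k) = (some c, 0, false) ∧
      (c = true ↔ ∃ m, lo x x₁ x₂ y k ≤ m ∧ m ≤ t x x₁ x₂ y k ∧ y m = true) := by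
  induction k with
  | zero =>
    by_cases hx : x.length = 0
    · refine ⟨y 0, ?_, ?_⟩
      · simp [t, st, gInit, hx]
      · constructor
        · intro h; exact ⟨0, by simp [lo], by simp [t, hx], h⟩
        · rintro ⟨m, _, hm2, hm3⟩
          have : m = 0 := by simp [t, hx] at hm2; omega
          exact this ▸ hm3
    · have hs0 : st x x₁ x₂ y 0 = (none, 0, y 0) := by simp [st, gInit, hx]
      obtain ⟨c, hc, hcf⟩ := blockExit y (p := none) (by simpa [lst] using hx) hs0
      refine ⟨c, by simpa [t, lst] using hc, ?_⟩
      rw [hcf]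
      constructor
      · rintro (h | ⟨m, hm1, hm2, hm3⟩)
        · exact ⟨0, by simp [lo], Nat.zero_le _, h⟩
        · exact ⟨m, by simp [lo], by simpa [t, lst] using hm2, hm3⟩
      · rintro ⟨m, hm1, hm2, hm3⟩
        rcases Nat.eq_zero_or_pos m with h | h
        · exact Or.inl (h ▸ hm3)
        · simp only [t] at hm2
          exact Or.inr ⟨m, by omega, by simpa [t, lst] using hm2, hm3⟩
  | succ k ih =>
    obtain ⟨c, hc, _⟩ := ih
    obtain ⟨c', hc', hcf'⟩ := blockExit y (lst_ne_none_nonempty h₁ h₂ c) hc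
    have ht : t x x₁ x₂ y (k + 1) = t x x₁ x₂ y k + (lst x x₁ x₂ (some c)).length := by
      simp [t, hc]
    refine ⟨c', by rw [ht]; exact hc', ?_⟩
    rw [hcf']
    simp only [Bool.false_eq_true, false_or, lo, ht]
    constructor
    · rintro ⟨m, hm1, hm2, hm3⟩; exact ⟨m, by omega, by omega, hm3⟩
    · rintro ⟨m, hm1, hm2, hm3⟩; exact ⟨m, by omega, by omega, hm3⟩

/-- the output word of the simulation (with default letter `d`) -/
def W (x x₁ x₂ : List Sig) (y : ℕ → Bool) (d : Sig) (j : ℕ) : Sig :=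
  (lst x x₁ x₂ (st x x₁ x₂ y j).1).getD (st x x₁ x₂ y j).2.1 d

/-- "block k's window contains an acc" -/
def Acc (x x₁ x₂ : List Sig) (y : ℕ → Bool) (k : ℕ) : Prop :=
  ∃ m, lo x x₁ x₂ y k ≤ m ∧ m ≤ t x x₁ x₂ y k ∧ y m = true

lemma t_succ (k : ℕ) : t x x₁ x₂ y (k + 1) = t x x₁ x₂ y k + (blk x x₁ x₂ y k).length := rfl

include h₁ h₂ in
lemma blk_cases (k : ℕ) :
    (blk x x₁ x₂ y k = x₂ ∧ Acc x x₁ x₂ y k) ∨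
    (blk x x₁ x₂ y k = x₁ ∧ ¬ Acc x x₁ x₂ y k) := by
  obtain ⟨c, hc, hcf⟩ := blockStart (x := x) h₁ h₂ y k
  have hblk : blk x x₁ x₂ y k = lst x x₁ x₂ (some c) := by simp [blk, hc]
  cases c with
  | true => exact Or.inl ⟨by simp [hblk, lst], hcf.1 rfl⟩
  | false =>
    refine Or.inr ⟨by simp [hblk, lst], fun h => ?_⟩
    simpa using hcf.2 h

include h₁ h₂ in
lemma blk_or (k : ℕ) : blk x x₁ x₂ y k = x₁ ∨ blk x x₁ x₂ y k = x₂ := by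
  rcases blk_cases h₁ h₂ y k with ⟨h, _⟩ | ⟨h, _⟩ <;> [exact Or.inr h; exact Or.inl h]

include h₁ h₂ in
lemma blk_ne (k : ℕ) : blk x x₁ x₂ y k ≠ [] := by
  rcases blk_or h₁ h₂ y k with h | h <;> rw [h] <;> assumption

include h₁ h₂ in
lemma t_strictMono : StrictMono (t x x₁ x₂ y) := by
  apply strictMono_nat_of_lt_succ
  intro k
  rw [t_succ]
  have := List.length_pos_iff.2 (blk_ne (x := x) h₁ h₂ y k)
  omega

include h₁ h₂ in
lemma t_ge (k : ℕ) : k ≤ t x x₁ x₂ y k := (t_strictMono h₁ h₂ y).le_apply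

lemma len_big (K : ℕ) :
    (x ++ ((List.range K).map (blk x x₁ x₂ y)).flatten).length = t x x₁ x₂ y K := by
  induction K with
  | zero => simp [t]
  | succ K ih =>
    rw [t_succ, ← ih]
    simp [List.range_succ]
    omega

include h₁ h₂ in
lemma W_block (d : Sig) (k i : ℕ) (hi : i < (blk x x₁ x₂ y k).length) :
    W x x₁ x₂ y d (t x x₁ x₂ y k + i) = (blk x x₁ x₂ y k).get ⟨i, hi⟩ := by
  obtain ⟨c, hc, -⟩ := blockStart (x := x) h₁ h₂ y k
  have hblk : blk x x₁ x₂ y k = lst x x₁ x₂ (some c) := by simp [blk, hc]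
  obtain ⟨f, hst, -⟩ := prog y hc i (by rw [← hblk]; exact hi)
  simp only [W, hst]
  rw [← hblk, List.get_eq_getElem, List.getD_eq_getElem _ _ hi]

lemma W_x (d : Sig) (hx : x ≠ []) (i : ℕ) (hi : i < x.length) :
    W x x₁ x₂ y d i = x.get ⟨i, hi⟩ := by
  have hs0 : st x x₁ x₂ y 0 = (none, 0, y 0) := by
    simp [st, gInit, List.length_eq_zero_iff.not.2 hx]
  obtain ⟨f, hst, -⟩ := prog y hs0 i (by simpa [lst] using hi)
  rw [Nat.zero_add] at hst
  simp only [W, hst]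
  rw [List.get_eq_getElem]
  exact List.getD_eq_getElem _ _ (by simpa [lst] using hi)

include h₁ h₂ in
lemma W_big (d : Sig) (K : ℕ) : ∀ i : ℕ,
    ∀ hi : i < (x ++ ((List.range K).map (blk x x₁ x₂ y)).flatten).length,
    W x x₁ x₂ y d i = (x ++ ((List.range K).map (blk x x₁ x₂ y)).flatten).get ⟨i, hi⟩ := by
  induction K with
  | zero =>
    intro i hi
    have hix : i < x.length := by simpa using hi
    have hx : x ≠ [] := by intro h; rw [h] at hix; simp at hix
    rw [W_x (x₁ := x₁) (x₂ := x₂) y d hx i hix, List.get_eq_getElem, List.get_eq_getElem]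
    simp [List.getElem_append, hix]
  | succ K ih =>
    have hsplit : x ++ ((List.range (K + 1)).map (blk x x₁ x₂ y)).flatten =
        (x ++ ((List.range K).map (blk x x₁ x₂ y)).flatten) ++ blk x x₁ x₂ y K := by
      simp [List.range_succ, List.append_assoc]
    intro i hi
    rw [List.get_eq_getElem]
    simp only [hsplit] at hi ⊢
    rw [List.getElem_append]
    split <;> rename_i h'
    · have := ih i h'
      rw [List.get_eq_getElem] at this
      exact this
    · have hlen : (x ++ ((List.range K).map (blk x x₁ x₂ y)).flatten).length
          = t x x₁ x₂ y K := len_big y K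
      rw [hlen] at h'
      have hi' : i < t x x₁ x₂ y K + (blk x x₁ x₂ y K).length := by
        have := hi
        simp only [List.length_append, hlen] at this
        omega
      have hilt : i - t x x₁ x₂ y K < (blk x x₁ x₂ y K).length := by omega
      have hieq : t x x₁ x₂ y K + (i - t x x₁ x₂ y K) = i := by omega
      calc W x x₁ x₂ y d i
          = W x x₁ x₂ y d (t x x₁ x₂ y K + (i - t x x₁ x₂ y K)) := by rw [hieq]
        _ = (blk x x₁ x₂ y K).get ⟨i - t x x₁ x₂ y K, hilt⟩ := W_block h₁ h₂ y d K _ hilt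
        _ = (blk x x₁ x₂ y K)[i - (x ++ ((List.range K).map (blk x x₁ x₂ y)).flatten).length] := by
            rw [List.get_eq_getElem]
            congr 1
            rw [hlen]

include h₁ h₂ in
lemma memA (d : Sig) (hf : {j | y j = true}.Finite) : W x x₁ x₂ y d ∈ LangA x x₁ x₂ := by
  obtain ⟨N, hN⟩ := hf.bddAbove
  simp only [upperBounds, Set.mem_setOf_eq] at hN
  refine ⟨(List.range (N + 1)).map (blk x x₁ x₂ y), ?_, ?_⟩
  · intro u hu
    simp only [List.mem_map, List.mem_range] at hu
    obtain ⟨k, -, rfl⟩ := hu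
    exact blk_or h₁ h₂ y k
  · intro n
    have hnoacc : ∀ i : ℕ, ¬ Acc x x₁ x₂ y (N + 1 + i) := by
      rintro i ⟨m, hm1, -, hm3⟩
      have hm : m ≤ N := hN hm3
      have hlo : lo x x₁ x₂ y (N + 1 + i) = t x x₁ x₂ y (N + i) + 1 := by
        have h' : N + 1 + i = (N + i) + 1 := by omega
        rw [h']
        rfl
      rw [hlo] at hm1
      have := t_ge (x := x) h₁ h₂ y (N + i)
      omega
    have hkey : (List.range n).map (blk x x₁ x₂ y ∘ fun i => N + 1 + i)
        = List.replicate n x₁ := by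
      refine List.eq_replicate_iff.2 ⟨by simp, ?_⟩
      intro b hb
      simp only [List.mem_map, List.mem_range] at hb
      obtain ⟨i, -, rfl⟩ := hb
      rcases blk_cases h₁ h₂ y (N + 1 + i) with ⟨-, hacc⟩ | ⟨hblk, -⟩
      · exact absurd hacc (hnoacc i)
      · exact hblk
    have hbig : x ++ ((List.range (N + 1 + n)).map (blk x x₁ x₂ y)).flatten
        = (x ++ ((List.range (N + 1)).map (blk x x₁ x₂ y)).flatten)
          ++ (List.replicate n x₁).flatten := by
      rw [List.range_add, List.map_append, List.map_map, hkey, List.flatten_append,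
        ← List.append_assoc]
    intro i
    have hi : i.1 < (x ++ ((List.range (N + 1 + n)).map (blk x x₁ x₂ y)).flatten).length := by
      rw [hbig]
      simpa [List.append_assoc] using i.2
    have hb := W_big h₁ h₂ y d (N + 1 + n) i.1 hi
    rw [List.get_eq_getElem] at hb ⊢
    rw [hb]
    simp only [hbig, List.append_assoc]

include h₁ h₂ in
lemma memB (d : Sig) (hf : ¬ {j | y j = true}.Finite) : W x x₁ x₂ y d ∈ LangB x x₁ x₂ := by
  classical
  -- every acc lies in the window of some block
  have key : ∀ m, y m = true → ∃ k, m ≤ t x x₁ x₂ y k ∧ Acc x x₁ x₂ y k := by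
    intro m hm
    have hex : ∃ k, m ≤ t x x₁ x₂ y k := ⟨m, t_ge h₁ h₂ y m⟩
    have hk : m ≤ t x x₁ x₂ y (Nat.find hex) := Nat.find_spec hex
    refine ⟨Nat.find hex, hk, m, ?_, hk, hm⟩
    rcases Nat.eq_zero_or_pos (Nat.find hex) with h0 | hpos
    · rw [h0]; exact Nat.zero_le m
    · have hmin := Nat.find_min hex (show Nat.find hex - 1 < Nat.find hex by omega)
      have hlo : lo x x₁ x₂ y (Nat.find hex) = t x x₁ x₂ y (Nat.find hex - 1) + 1 := by
        rw [show Nat.find hex = (Nat.find hex - 1) + 1 by omega]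
        rfl
      rw [hlo]
      omega
  -- infinitely many blocks have an acc in their window
  have hAinf : {k | Acc x x₁ x₂ y k}.Infinite := by
    apply Set.infinite_of_not_bddAbove
    rintro ⟨K, hK⟩
    apply hf
    apply Set.Finite.subset (Set.finite_Iic (t x x₁ x₂ y K))
    intro m hm
    obtain ⟨k, hk1, hk2⟩ := key m hm
    have hkK : k ≤ K := hK hk2
    exact le_trans hk1 ((t_strictMono h₁ h₂ y).monotone hkK)
  set P := fun k => Acc x x₁ x₂ y k with hP
  set e := Nat.nth P with he
  have hmem : ∀ n, P (e n) := Nat.nth_mem_of_infinite hAinf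
  have hsm : StrictMono e := Nat.nth_strictMono hAinf
  have hsurj : ∀ k, P k → ∃ i, e i = k := fun k hk => ⟨Nat.count P k, Nat.nth_count hk⟩
  set E : ℕ → ℕ := fun n => Nat.rec 0 (fun m _ => e m + 1) n with hE
  have hE0 : E 0 = 0 := rfl
  have hES : ∀ n, E (n + 1) = e n + 1 := fun n => rfl
  have hEle : ∀ n, E n ≤ e n := by
    intro n
    cases n with
    | zero => exact Nat.zero_le _
    | succ n => rw [hES]; exact hsm (Nat.lt_succ_self n)
  set jf : ℕ → ℕ := fun n => e n - E n with hjf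
  have hEe : ∀ n, E n + jf n = e n := fun n => by have := hEle n; simp [hjf]; omega
  have hnoP : ∀ n m, E n ≤ m → m < e n → ¬ P m := by
    intro n m hm1 hm2 hPm
    obtain ⟨i, rfl⟩ := hsurj m hPm
    have hin : i < n := hsm.lt_iff_lt.1 hm2
    cases n with
    | zero => omega
    | succ n =>
      rw [hES] at hm1
      have : n < i := hsm.lt_iff_lt.1 (show e n < e i by omega)
      omega
  -- the segment of blocks between consecutive acc-blocks
  have hseg : ∀ n, (List.range (E (n + 1))).map (blk x x₁ x₂ y)
      = (List.range (E n)).map (blk x x₁ x₂ y)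
        ++ (List.replicate (jf n) x₁ ++ [x₂]) := by
    intro n
    have hEsum : E (n + 1) = E n + (jf n + 1) := by
      rw [hES]
      have := hEe n
      omega
    rw [hEsum, List.range_add, List.map_append, List.map_map]
    congr 1
    refine List.ext_getElem (by simp) ?_
    intro i hi1 hi2
    simp only [List.length_map, List.length_range] at hi1
    simp only [List.getElem_map, List.getElem_range, Function.comp_apply]
    rw [List.getElem_append]
    split <;> rename_i hlt
    · simp only [List.length_replicate] at hlt
      rw [List.getElem_replicate]
      rcases blk_cases (x := x) h₁ h₂ y (E n + i) with ⟨-, hacc⟩ | ⟨hblk, -⟩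
      · exact absurd hacc (hnoP n (E n + i) (by omega) (by have := hEe n; omega))
      · exact hblk
    · simp only [List.length_replicate] at hlt
      have hieq : i = jf n := by omega
      have hEni : E n + i = e n := by rw [hieq]; exact hEe n
      rw [hEni]
      rcases blk_cases (x := x) h₁ h₂ y (e n) with ⟨hblk, -⟩ | ⟨-, hacc⟩
      · simp [hblk, hieq]
      · exact absurd (hmem n) hacc
  -- the grouped flattening
  have hgrp : ∀ n, ((List.range n).map
        (fun i => (List.replicate (jf i) x₁).flatten ++ x₂)).flatten
      = ((List.range (E n)).map (blk x x₁ x₂ y)).flatten := by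
    intro n
    induction n with
    | zero => simp [hE0]
    | succ n ih =>
      rw [hseg n, List.flatten_append, ← ih, List.range_succ, List.map_append,
        List.flatten_append]
      simp
  refine ⟨jf, ?_⟩
  intro n
  have hbig : x ++ ((List.range n).map
        (fun i => (List.replicate (jf i) x₁).flatten ++ x₂)).flatten
      = x ++ ((List.range (E n)).map (blk x x₁ x₂ y)).flatten := by rw [hgrp]
  intro i
  have hi : i.1 < (x ++ ((List.range (E n)).map (blk x x₁ x₂ y)).flatten).length := by
    rw [← hbig]
    exact i.2
  have hb := W_big h₁ h₂ y d (E n) i.1 hi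
  rw [List.get_eq_getElem] at hb ⊢
  rw [hb]
  simp only [hbig]

def M (x x₁ x₂ : List Sig) : ℕ := x.length + x₁.length + x₂.length + 1

def emb (x x₁ x₂ : List Sig) (s : St Sig) : Option (Option Bool × Fin (M x x₁ x₂) × Bool) :=
  some (s.1, ⟨s.2.1 % M x x₁ x₂, Nat.mod_lt _ (by unfold M; omega)⟩, s.2.2)

def Rfut (x x₁ x₂ : List Sig) (d : Sig) : Transducer Bool Sig where
  S := Option (Option Bool × Fin (M x x₁ x₂) × Bool)
  init := none
  ρ := fun s b => match s with
    | none => emb x x₁ x₂ (gInit x b)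
    | some (p, i, f) => emb x x₁ x₂ (g x x₁ x₂ (p, i.1, f) b)
  τ := fun s => match s with
    | none => d
    | some (p, i, f) => (lst x x₁ x₂ p).getD i.1 d

lemma lst_len_lt (p : Option Bool) : (lst x x₁ x₂ p).length < M x x₁ x₂ := by
  rcases p with - | c
  · simp only [lst, M]; omega
  · cases c <;> simp only [lst, M] <;> omega

include h₁ h₂ in
lemma run_eq (d : Sig) (j : ℕ) :
    (Rfut x x₁ x₂ d).run y (j + 1) = emb x x₁ x₂ (st x x₁ x₂ y j) := by
  induction j with
  | zero => rfl
  | succ j ih =>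
    have hlt : (st x x₁ x₂ y j).2.1 < M x x₁ x₂ :=
      lt_trans (inv h₁ h₂ y j) (lst_len_lt _)
    have hm : (st x x₁ x₂ y j).2.1 % M x x₁ x₂ = (st x x₁ x₂ y j).2.1 :=
      Nat.mod_eq_of_lt hlt
    show (Rfut x x₁ x₂ d).ρ ((Rfut x x₁ x₂ d).run y (j + 1)) (y (j + 1)) = _
    rw [ih]
    show emb x x₁ x₂ (g x x₁ x₂
        ((st x x₁ x₂ y j).1, (st x x₁ x₂ y j).2.1 % M x x₁ x₂, (st x x₁ x₂ y j).2.2)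
        (y (j + 1))) = _
    rw [hm]
    rfl

include h₁ h₂ in
lemma out_eq (d : Sig) (j : ℕ) :
    (Rfut x x₁ x₂ d).out y j = W x x₁ x₂ y d j := by
  have hlt : (st x x₁ x₂ y j).2.1 < M x x₁ x₂ :=
    lt_trans (inv h₁ h₂ y j) (lst_len_lt _)
  have hm : (st x x₁ x₂ y j).2.1 % M x x₁ x₂ = (st x x₁ x₂ y j).2.1 :=
    Nat.mod_eq_of_lt hlt
  show (Rfut x x₁ x₂ d).τ ((Rfut x x₁ x₂ d).run y (j + 1)) = _
  rw [run_eq h₁ h₂ y d j]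
  show (lst x x₁ x₂ (st x x₁ x₂ y j).1).getD ((st x x₁ x₂ y j).2.1 % M x x₁ x₂) d = _
  rw [hm]
  rfl

end Stmt6Aux

/-- From a certificate `(x, x₁, x₂)` for non-DBW-recognizability of `L` one can build a
DBW-refuter `R` for `L` such that inputs with infinitely many acc's produce words in
`x·(x₁*·x₂)^ω` and inputs with finitely many acc's produce words in `x·(x₁+x₂)*·x₁^ω`. -/
theorem stmt_6 {Sig : Type} [Fintype Sig] (L : Set (ℕ → Sig)) (x x₁ x₂ : List Sig)
    (h₁ : x₁ ≠ []) (h₂ : x₂ ≠ [])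
    (hA : LangA x x₁ x₂ ⊆ L) (hB : LangB x x₁ x₂ ∩ L = ∅) :
    ∃ R : Transducer Bool Sig, DBWRefuter L R ∧
      ∀ y : ℕ → Bool,
        (¬ {j | y j = true}.Finite → R.out y ∈ LangB x x₁ x₂) ∧
        ({j | y j = true}.Finite → R.out y ∈ LangA x x₁ x₂) := by
  set d := x₁.head h₁ with hd
  refine ⟨Stmt6Aux.Rfut x x₁ x₂ d, ?_, ?_⟩
  · intro y
    have hout : (Stmt6Aux.Rfut x x₁ x₂ d).out y = Stmt6Aux.W x x₁ x₂ y d :=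
      funext (Stmt6Aux.out_eq h₁ h₂ y d)
    constructor
    · intro hmemL
      by_contra hinf
      have hWB := Stmt6Aux.memB (x := x) h₁ h₂ y d hinf
      rw [hout] at hmemL
      exact Set.eq_empty_iff_forall_notMem.1 hB _ ⟨hWB, hmemL⟩
    · intro hfin
      rw [hout]
      exact hA (Stmt6Aux.memA (x := x) h₁ h₂ y d hfin)
  · intro y
    have hout : (Stmt6Aux.Rfut x x₁ x₂ d).out y = Stmt6Aux.W x x₁ x₂ y d :=
      funext (Stmt6Aux.out_eq h₁ h₂ y d)
    constructor
    · intro hinf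
      rw [hout]
      exact Stmt6Aux.memB (x := x) h₁ h₂ y d hinf
    · intro hfin
      rw [hout]
      exact Stmt6Aux.memA (x := x) h₁ h₂ y d hfin
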